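/- Let G be a finite abelian group with |G| = m and let A ⊆ G. If R_A(g) ≤ 5 for all g ∈ G, then the number of elements g ∈ G with R_A(g) = 2 satisfies |S_2| ≤ (1/2)m + 3√(5m). -/

import Mathlib

open Finset

/-- `repFn A g` is the number of ordered pairs `(a, a') ∈ A × A` with `a + a' = g`. -/
def repFn {G : Type*} [AddCommGroup G] [DecidableEq G] (A : Finset G) (g : G) : ℕ :=
  ((A ×ˢ A).filter fun p => p.1 + p.2 = g).card

section Aux

variable {G : Type*} [AddCommGroup G] [Fintype G] [DecidableEq G] (A : Finset G)

/-- number of ordered pairs with difference `x` -/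
def diffFn (x : G) : ℕ := ((A ×ˢ A).filter fun p => p.1 - p.2 = x).card

/-- number of `x ∈ A` with `x + x = g` -/
def tFn (g : G) : ℕ := (A.filter fun x => x + x = g).card

lemma sum_repFn : ∑ g : G, repFn A g = A.card * A.card := by
  have h := Finset.card_eq_sum_card_fiberwise
    (f := fun p : G × G => p.1 + p.2) (s := A ×ˢ A) (t := univ) (fun p _ => mem_univ _)
  rw [Finset.card_product] at h
  exact h.symm

lemma sum_diffFn : ∑ x : G, diffFn A x = A.card * A.card := by
  have h := Finset.card_eq_sum_card_fiberwise
    (f := fun p : G × G => p.1 - p.2) (s := A ×ˢ A) (t := univ) (fun p _ => mem_univ _)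
  rw [Finset.card_product] at h
  exact h.symm

lemma sum_tFn : ∑ g : G, tFn A g = A.card := by
  have h := Finset.card_eq_sum_card_fiberwise
    (f := fun x : G => x + x) (s := A) (t := univ) (fun p _ => mem_univ _)
  exact h.symm

lemma diffFn_zero : diffFn A 0 = A.card := by
  unfold diffFn
  rw [show ((A ×ˢ A).filter fun p => p.1 - p.2 = (0:G))
      = ((A ×ˢ A).filter fun p => p.1 = p.2) by
    apply Finset.filter_congr; intro p _; simp [sub_eq_zero]]
  apply Finset.card_nbij' (i := fun p : G × G => p.1) (j := fun a : G => (a, a))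
  · intro p hp
    change _ ∈ (_ : Finset _) at hp
    simp only [mem_filter, mem_product] at hp
    exact hp.1.1
  · intro a ha
    change _ ∈ (_ : Finset _) at ha
    change _ ∈ (_ : Finset _)
    simp only [mem_filter, mem_product]
    exact ⟨⟨ha, ha⟩, trivial⟩
  · rintro ⟨p1, p2⟩ hp
    change _ ∈ (_ : Finset _) at hp
    simp only [mem_filter, mem_product] at hp
    rw [hp.2]
  · intro a _; rfl

lemma repFn_mod_two (g : G) : repFn A g % 2 = tFn A g % 2 := by
  classical
  have hsplit :
      (((A ×ˢ A).filter fun p => p.1 + p.2 = g).filter fun p : G × G => p.1 = p.2).card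
        + (((A ×ˢ A).filter fun p => p.1 + p.2 = g).filter fun p : G × G => ¬(p.1 = p.2)).card
        = repFn A g :=
    Finset.card_filter_add_card_filter_not _
  have hdiag :
      (((A ×ˢ A).filter fun p => p.1 + p.2 = g).filter fun p : G × G => p.1 = p.2).card
        = tFn A g := by
    apply Finset.card_nbij' (i := fun p : G × G => p.1) (j := fun a : G => (a, a))
    · intro p hp
      change _ ∈ (_ : Finset _) at hp
      change _ ∈ (_ : Finset _)
      simp only [mem_filter, mem_product, tFn] at hp ⊢
      obtain ⟨⟨⟨h1, h2⟩, h3⟩, h4⟩ := hp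
      refine ⟨h1, ?_⟩
      rw [h4] at h3 ⊢
      exact h3
    · intro a ha
      change _ ∈ (_ : Finset _) at ha
      change _ ∈ (_ : Finset _)
      simp only [tFn, mem_filter] at ha
      simp only [mem_filter, mem_product]
      exact ⟨⟨⟨ha.1, ha.1⟩, ha.2⟩, trivial⟩
    · rintro ⟨p1, p2⟩ hp
      change _ ∈ (_ : Finset _) at hp
      simp only [mem_filter, mem_product] at hp
      rw [hp.2]
    · intro a _; rfl
  have hoff :
      (((A ×ˢ A).filter fun p => p.1 + p.2 = g).filter fun p : G × G => ¬(p.1 = p.2)).card % 2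
        = 0 := by
    set O := ((A ×ˢ A).filter fun p => p.1 + p.2 = g).filter fun p : G × G => ¬(p.1 = p.2)
      with hO
    have hz : (∑ _p ∈ O, (1 : ZMod 2)) = 0 := by
      apply Finset.sum_involution (g := fun p _ => (p.2, p.1))
      · intro p _; decide
      · intro p hp _
        intro hEq
        simp only [hO, mem_filter, mem_product] at hp
        exact hp.2 (congrArg Prod.fst hEq).symm
      · intro p hp
        simp only [hO, mem_filter, mem_product] at hp ⊢
        refine ⟨⟨⟨hp.1.1.2, hp.1.1.1⟩, ?_⟩, ?_⟩
        · rw [add_comm]; exact hp.1.2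
        · intro hEq; exact hp.2 hEq.symm
      · intro p _; rfl
    have hcast : ((O.card : ℕ) : ZMod 2) = 0 := by
      rw [Finset.card_eq_sum_ones, Nat.cast_sum]
      simpa using hz
    have h2 : (2 : ℕ) ∣ O.card := by
      rwa [ZMod.natCast_eq_zero_iff] at hcast
    omega
  omega

lemma sum_sq_repFn_eq_sum_sq_diffFn :
    ∑ g : G, repFn A g * repFn A g = ∑ x : G, diffFn A x * diffFn A x := by
  classical
  have hS : (((A ×ˢ A) ×ˢ (A ×ˢ A)).filter
        fun q : (G × G) × (G × G) => q.1.1 + q.1.2 = q.2.1 + q.2.2).card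
      = ∑ g : G, repFn A g * repFn A g := by
    rw [Finset.card_eq_sum_card_fiberwise
      (f := fun q : (G × G) × (G × G) => q.1.1 + q.1.2) (t := univ) (fun q _ => mem_univ _)]
    apply Finset.sum_congr rfl
    intro g _
    have hset : ((((A ×ˢ A) ×ˢ (A ×ˢ A)).filter
          fun q : (G × G) × (G × G) => q.1.1 + q.1.2 = q.2.1 + q.2.2).filter
          fun q => q.1.1 + q.1.2 = g)
        = ((A ×ˢ A).filter fun p => p.1 + p.2 = g) ×ˢ ((A ×ˢ A).filter fun p => p.1 + p.2 = g) := by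
      ext q
      simp only [mem_filter, mem_product]
      constructor
      · rintro ⟨⟨⟨h1, h2⟩, h3⟩, h4⟩
        exact ⟨⟨h1, h4⟩, h2, by rw [← h3]; exact h4⟩
      · rintro ⟨⟨h1, h4⟩, h2, h5⟩
        exact ⟨⟨⟨h1, h2⟩, by rw [h4, h5]⟩, h4⟩
    rw [hset, Finset.card_product]
    rfl
  have hT : (((A ×ˢ A) ×ˢ (A ×ˢ A)).filter
        fun q : (G × G) × (G × G) => q.1.1 - q.1.2 = q.2.1 - q.2.2).card
      = ∑ x : G, diffFn A x * diffFn A x := by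
    rw [Finset.card_eq_sum_card_fiberwise
      (f := fun q : (G × G) × (G × G) => q.1.1 - q.1.2) (t := univ) (fun q _ => mem_univ _)]
    apply Finset.sum_congr rfl
    intro x _
    have hset : ((((A ×ˢ A) ×ˢ (A ×ˢ A)).filter
          fun q : (G × G) × (G × G) => q.1.1 - q.1.2 = q.2.1 - q.2.2).filter
          fun q => q.1.1 - q.1.2 = x)
        = ((A ×ˢ A).filter fun p => p.1 - p.2 = x) ×ˢ ((A ×ˢ A).filter fun p => p.1 - p.2 = x) := by
      ext q
      simp only [mem_filter, mem_product]
      constructor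
      · rintro ⟨⟨⟨h1, h2⟩, h3⟩, h4⟩
        exact ⟨⟨h1, h4⟩, h2, by rw [← h3]; exact h4⟩
      · rintro ⟨⟨h1, h4⟩, h2, h5⟩
        exact ⟨⟨⟨h1, h2⟩, by rw [h4, h5]⟩, h4⟩
    rw [hset, Finset.card_product]
    rfl
  rw [← hS, ← hT]
  apply Finset.card_nbij'
    (i := fun q : (G × G) × (G × G) => ((q.1.1, q.2.1), (q.2.2, q.1.2)))
    (j := fun q : (G × G) × (G × G) => ((q.1.1, q.2.2), (q.1.2, q.2.1)))
  · intro q hq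
    change _ ∈ (_ : Finset _) at hq
    change _ ∈ (_ : Finset _)
    simp only [mem_filter, mem_product] at hq ⊢
    obtain ⟨⟨⟨h1, h2⟩, h3, h4⟩, h5⟩ := hq
    refine ⟨⟨⟨h1, h3⟩, h4, h2⟩, ?_⟩
    rw [sub_eq_sub_iff_add_eq_add, h5]
    exact add_comm _ _
  · intro q hq
    change _ ∈ (_ : Finset _) at hq
    change _ ∈ (_ : Finset _)
    simp only [mem_filter, mem_product] at hq ⊢
    obtain ⟨⟨⟨h1, h2⟩, h3, h4⟩, h5⟩ := hq
    refine ⟨⟨⟨h1, h4⟩, h2, h3⟩, ?_⟩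
    rw [sub_eq_sub_iff_add_eq_add] at h5
    rw [h5]
    exact add_comm _ _
  · intro q _; rfl
  · intro q _; rfl

end Aux

theorem stmt_3 {G : Type*} [AddCommGroup G] [Fintype G] [DecidableEq G]
    (m : ℕ) (hm : Fintype.card G = m) (A : Finset G)
    (h : ∀ g : G, repFn A g ≤ 5) :
    (((Finset.univ.filter fun g : G => repFn A g = 2).card : ℝ)) ≤
      (1 / 2 : ℝ) * m + 3 * Real.sqrt (5 * m) := by
  classical
  have h0 : (0 : G) ∈ (univ : Finset G) := mem_univ _
  have hsum : ∑ g : G, repFn A g = A.card * A.card := sum_repFn A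
  have hsumd : ∑ x : G, diffFn A x = A.card * A.card := sum_diffFn A
  have hsumt : ∑ g : G, tFn A g = A.card := sum_tFn A
  have hd0 : diffFn A 0 = A.card := diffFn_zero A
  have hE : ∑ g : G, repFn A g * repFn A g = ∑ x : G, diffFn A x * diffFn A x :=
    sum_sq_repFn_eq_sum_sq_diffFn A
  -- split off the 0 term of the difference sums
  have hsplitD : diffFn A 0 + ∑ x ∈ univ.erase (0 : G), diffFn A x = ∑ x : G, diffFn A x :=
    Finset.add_sum_erase _ _ h0
  have hsplitD2 : diffFn A 0 * diffFn A 0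
      + ∑ x ∈ univ.erase (0 : G), diffFn A x * diffFn A x
      = ∑ x : G, diffFn A x * diffFn A x :=
    Finset.add_sum_erase _ (fun x => diffFn A x * diffFn A x) h0
  have hMm : (univ.erase (0 : G)).card + 1 = m := by
    rw [Finset.card_erase_add_one h0, card_univ, hm]
  -- pointwise quadratic bound on differences, using integrality
  have hDpt : ∀ x ∈ univ.erase (0 : G), 3 * diffFn A x ≤ diffFn A x * diffFn A x + 2 := by
    intro x _
    obtain ⟨D, hD⟩ : ∃ D, diffFn A x = D := ⟨_, rfl⟩
    rw [hD]
    rcases D with _ | _ | D'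
    · simp
    · simp
    · nlinarith [Nat.zero_le D']
  have hD : 3 * (∑ x ∈ univ.erase (0 : G), diffFn A x)
      ≤ (∑ x ∈ univ.erase (0 : G), diffFn A x * diffFn A x)
        + 2 * (univ.erase (0 : G)).card := by
    calc 3 * (∑ x ∈ univ.erase (0 : G), diffFn A x)
        = ∑ x ∈ univ.erase (0 : G), 3 * diffFn A x := by rw [Finset.mul_sum]
      _ ≤ ∑ x ∈ univ.erase (0 : G), (diffFn A x * diffFn A x + 2) := Finset.sum_le_sum hDpt
      _ = (∑ x ∈ univ.erase (0 : G), diffFn A x * diffFn A x)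
            + 2 * (univ.erase (0 : G)).card := by
          rw [Finset.sum_add_distrib, Finset.sum_const, smul_eq_mul, mul_comm]
  -- parity: S₅ is small
  have hn5 : (univ.filter fun g : G => repFn A g = 5).card ≤ A.card := by
    calc (univ.filter fun g : G => repFn A g = 5).card
        = ∑ _g ∈ univ.filter (fun g : G => repFn A g = 5), 1 := by
          rw [Finset.card_eq_sum_ones]
      _ ≤ ∑ g ∈ univ.filter (fun g : G => repFn A g = 5), tFn A g := by
          apply Finset.sum_le_sum
          intro g hg
          simp only [mem_filter] at hg
          have hpar := repFn_mod_two A g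
          rw [hg.2] at hpar
          omega
      _ ≤ ∑ g : G, tFn A g := Finset.sum_le_sum_of_subset (Finset.filter_subset _ _)
      _ = A.card := hsumt
  -- pointwise main inequality
  have hpt : ∀ g : G, 4 * (if repFn A g = 2 then 1 else 0) + repFn A g * repFn A g
      ≤ 4 * repFn A g + 5 * (if repFn A g = 5 then 1 else 0) := by
    intro g
    have h5 := h g
    obtain ⟨r, hr⟩ : ∃ r, repFn A g = r := ⟨_, rfl⟩
    rw [hr] at h5 ⊢
    interval_cases r <;> simp
  have hmain : 4 * (univ.filter fun g : G => repFn A g = 2).card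
      + ∑ g : G, repFn A g * repFn A g
      ≤ 4 * (A.card * A.card) + 5 * (univ.filter fun g : G => repFn A g = 5).card := by
    have e2 : (univ.filter fun g : G => repFn A g = 2).card
        = ∑ g : G, (if repFn A g = 2 then 1 else 0) := Finset.card_filter _ _
    have e5 : (univ.filter fun g : G => repFn A g = 5).card
        = ∑ g : G, (if repFn A g = 5 then 1 else 0) := Finset.card_filter _ _
    calc 4 * (univ.filter fun g : G => repFn A g = 2).card
          + ∑ g : G, repFn A g * repFn A g
        = ∑ g : G, (4 * (if repFn A g = 2 then 1 else 0) + repFn A g * repFn A g) := by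
          rw [e2, Finset.mul_sum, ← Finset.sum_add_distrib]
      _ ≤ ∑ g : G, (4 * repFn A g + 5 * (if repFn A g = 5 then 1 else 0)) :=
          Finset.sum_le_sum fun g _ => hpt g
      _ = 4 * (A.card * A.card) + 5 * (univ.filter fun g : G => repFn A g = 5).card := by
          rw [Finset.sum_add_distrib, ← Finset.mul_sum, ← Finset.mul_sum, hsum, ← e5]
  -- |A|² ≤ 5m
  have haa : A.card * A.card ≤ 5 * m := by
    calc A.card * A.card = ∑ g : G, repFn A g := hsum.symm
      _ ≤ ∑ _g : G, 5 := Finset.sum_le_sum fun g _ => h g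
      _ = 5 * m := by rw [Finset.sum_const, card_univ, hm, smul_eq_mul, mul_comm]
  -- assemble: 4 * n₂ ≤ 2m + 8|A|
  have hEe : ∑ g : G, repFn A g * repFn A g
      = A.card * A.card + ∑ x ∈ univ.erase (0 : G), diffFn A x * diffFn A x := by
    rw [hE, ← hsplitD2, hd0]
  have hsig : A.card + ∑ x ∈ univ.erase (0 : G), diffFn A x = A.card * A.card := by
    rw [← hsumd, ← hsplitD, hd0]
  have hfin : 4 * (univ.filter fun g : G => repFn A g = 2).card ≤ 2 * m + 8 * A.card := by
    rw [hEe] at hmain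
    linarith [hmain, hD, hsig, hn5, hMm]
  -- pass to the reals
  have hm2 : (((univ.filter fun g : G => repFn A g = 2).card : ℝ))
      ≤ (m : ℝ) / 2 + 2 * (A.card : ℝ) := by
    have h' : ((4 * (univ.filter fun g : G => repFn A g = 2).card : ℕ) : ℝ)
        ≤ ((2 * m + 8 * A.card : ℕ) : ℝ) := Nat.cast_le.mpr hfin
    push_cast at h'
    linarith
  have hsa : (A.card : ℝ) ≤ Real.sqrt (5 * (m : ℝ)) := by
    have h1 : ((A.card : ℝ)) ^ 2 ≤ 5 * (m : ℝ) := by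
      have h' : ((A.card * A.card : ℕ) : ℝ) ≤ ((5 * m : ℕ) : ℝ) := Nat.cast_le.mpr haa
      push_cast at h'
      nlinarith [h']
    have h2 := Real.sqrt_le_sqrt h1
    rwa [Real.sqrt_sq (by positivity : (0 : ℝ) ≤ (A.card : ℝ))] at h2
  have hs0 : 0 ≤ Real.sqrt (5 * (m : ℝ)) := Real.sqrt_nonneg _
  linarith
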